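/- Every vector in the triangular grid has a unique representation (a,b,c) in shortest path form, that is, with at least one component zero and the other two components not both strictly positive nor both strictly negative. -/
import Mathlib


/-- The vector denoted by the address `(a,b,c)`, i.e. `a·i + b·j + c·k`
where `i = (1,0)`, `j = (0,1)`, `k = (-1,-1)` satisfy `i + j + k = 0`. -/
def triVec (a b c : ℤ) : ℤ × ℤ := a • ((1 : ℤ), (0 : ℤ)) + b • ((0 : ℤ), (1 : ℤ)) + c • ((-1 : ℤ), (-1 : ℤ))

/-- `(a,b,c)` is a shortest path form: at least one component is zero, and the
other two components are not both strictly positive nor both strictly negative. -/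
def ShortestPathForm (a b c : ℤ) : Prop :=
  (a = 0 ∧ ¬(0 < b ∧ 0 < c) ∧ ¬(b < 0 ∧ c < 0)) ∨
  (b = 0 ∧ ¬(0 < a ∧ 0 < c) ∧ ¬(a < 0 ∧ c < 0)) ∨
  (c = 0 ∧ ¬(0 < a ∧ 0 < b) ∧ ¬(a < 0 ∧ b < 0))

lemma triVec_eq (a b c : ℤ) : triVec a b c = (a - c, b - c) := by
  simp [triVec, Prod.ext_iff]
  constructor <;> ring

/-- Every vector of the triangular grid has a unique representation `(a,b,c)`
in shortest path form. -/
theorem unique_shortest_path_form (v : ℤ × ℤ) :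
    ∃! t : ℤ × ℤ × ℤ, triVec t.1 t.2.1 t.2.2 = v ∧ ShortestPathForm t.1 t.2.1 t.2.2 := by
  obtain ⟨x, y⟩ := v
  by_cases h1 : 0 < x ∧ 0 < y
  · refine ⟨(x - min x y, y - min x y, -min x y), ⟨?_, ?_⟩, ?_⟩
    · rw [triVec_eq]; simp [Prod.ext_iff]
    · unfold ShortestPathForm; dsimp only; omega
    · rintro ⟨a, b, c⟩ ⟨heq, hspf⟩
      rw [triVec_eq] at heq
      simp only [Prod.ext_iff] at heq ⊢
      unfold ShortestPathForm at hspf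
      dsimp only at hspf heq ⊢
      omega
  · by_cases h2 : x < 0 ∧ y < 0
    · refine ⟨(x - max x y, y - max x y, -max x y), ⟨?_, ?_⟩, ?_⟩
      · rw [triVec_eq]; simp [Prod.ext_iff]
      · unfold ShortestPathForm; dsimp only; omega
      · rintro ⟨a, b, c⟩ ⟨heq, hspf⟩
        rw [triVec_eq] at heq
        simp only [Prod.ext_iff] at heq ⊢
        unfold ShortestPathForm at hspf
        dsimp only at hspf heq ⊢
        omega
    · refine ⟨(x, y, 0), ⟨?_, ?_⟩, ?_⟩
      · rw [triVec_eq]; simp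
      · unfold ShortestPathForm; dsimp only; omega
      · rintro ⟨a, b, c⟩ ⟨heq, hspf⟩
        rw [triVec_eq] at heq
        simp only [Prod.ext_iff] at heq ⊢
        unfold ShortestPathForm at hspf
        dsimp only at hspf heq ⊢
        omega
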